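/- Let a ≥ 0, R > e^{1/(3e)}(1+a)^{1/3}, and let y₁ : [-1,0] → ℝ be the restriction of a holomorphic function on the disk D(0,R) satisfying Pⁿy₁(0) = ∂ₓPⁿy₁(0) = 0 for all n ≥ 0, where P = ∂ₓ³ + a∂ₓ. Set b_n := ∂ₓ²Pⁿy₁(0). Then there exist H ∈ (0, e^{-1/e}) and C > 0 such that |b_n| ≤ C Hⁿ (3n)! for all n ≥ 0. -/

import Mathlib

/-- The operator `P f = f''' + a f'` acting on complex functions. -/
noncomputable def PopC (a : ℝ) (f : ℂ → ℂ) : ℂ → ℂ :=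
  fun z => iteratedDeriv 3 f z + (a : ℂ) * deriv f z

open Metric Finset in
private lemma deriv_sum_iter {R : ℝ} {F : ℂ → ℂ} (hA : AnalyticOnNhd ℂ F (ball (0:ℂ) R))
    (s : Finset ℕ) (d : ℕ → ℂ) (m : ℕ → ℕ) {g : ℂ → ℂ}
    (hg : Set.EqOn g (fun z => ∑ j ∈ s, d j * iteratedDeriv (m j) F z) (ball (0:ℂ) R)) :
    Set.EqOn (deriv g) (fun z => ∑ j ∈ s, d j * iteratedDeriv (m j + 1) F z)
      (ball (0:ℂ) R) := by
  intro z hz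
  have hdiff : ∀ j : ℕ, DifferentiableAt ℂ (iteratedDeriv (m j) F) z := by
    intro j
    have h := (hA.iterated_deriv (m j)) z hz
    rw [← iteratedDeriv_eq_iterate] at h
    exact h.differentiableAt
  have h1 : deriv g z = deriv (fun z => ∑ j ∈ s, d j * iteratedDeriv (m j) F z) z :=
    Filter.EventuallyEq.deriv_eq (hg.eventuallyEq_of_mem (isOpen_ball.mem_nhds hz))
  rw [h1, deriv_fun_sum (fun j _ => ((hdiff j).const_mul (d j)))]
  refine Finset.sum_congr rfl fun j _ => ?_
  rw [deriv_const_mul _ (hdiff j), ← iteratedDeriv_succ]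

open Metric Finset in
private lemma popC_iterate_eqOn (a : ℝ) {R : ℝ} {F : ℂ → ℂ}
    (hA : AnalyticOnNhd ℂ F (ball (0:ℂ) R)) (n : ℕ) :
    Set.EqOn ((PopC a)^[n] F)
      (fun z => ∑ j ∈ Finset.range (n+1),
        (n.choose j : ℂ) * (a : ℂ)^j * iteratedDeriv (3*n - 2*j) F z)
      (ball (0:ℂ) R) := by
  induction n with
  | zero => intro z hz; simp
  | succ n ih =>
    have h1 := deriv_sum_iter hA _ (fun j => (n.choose j : ℂ) * (a : ℂ)^j)
      (fun j => 3*n - 2*j) ih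
    have h2 := deriv_sum_iter hA _ (fun j => (n.choose j : ℂ) * (a : ℂ)^j)
      (fun j => 3*n - 2*j + 1) h1
    have h3 := deriv_sum_iter hA _ (fun j => (n.choose j : ℂ) * (a : ℂ)^j)
      (fun j => 3*n - 2*j + 1 + 1) h2
    intro z hz
    have hit : (PopC a)^[n+1] F z = PopC a ((PopC a)^[n] F) z := by
      rw [Function.iterate_succ_apply']
    rw [hit]
    have e3 : iteratedDeriv 3 ((PopC a)^[n] F) z
        = deriv (deriv (deriv ((PopC a)^[n] F))) z := by
      rw [show (3:ℕ) = 2+1 from rfl, iteratedDeriv_succ,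
        show (2:ℕ) = 1+1 from rfl, iteratedDeriv_succ, iteratedDeriv_one]
    show iteratedDeriv 3 ((PopC a)^[n] F) z + (a:ℂ) * deriv ((PopC a)^[n] F) z = _
    rw [e3, h3 hz, h1 hz]
    simp only []
    have sumA : ∑ j ∈ range (n+1), (n.choose j : ℂ) * (a:ℂ)^j
          * iteratedDeriv (3*n-2*j+1+1+1) F z
        = ∑ j ∈ range (n+2), (n.choose j : ℂ) * (a:ℂ)^j
          * iteratedDeriv (3*(n+1)-2*j) F z := by
      rw [Finset.sum_range_succ
        (fun j => (n.choose j : ℂ) * (a:ℂ)^j * iteratedDeriv (3*(n+1)-2*j) F z) (n+1)]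
      rw [Nat.choose_succ_self]
      push_cast
      rw [zero_mul, zero_mul, add_zero]
      refine Finset.sum_congr rfl fun j hj => ?_
      have hj' := Finset.mem_range.mp hj
      congr 2
      omega
    have sumB : (a:ℂ) * ∑ j ∈ range (n+1), (n.choose j : ℂ) * (a:ℂ)^j
          * iteratedDeriv (3*n-2*j+1) F z
        = ∑ j ∈ range (n+2), (if j = 0 then 0 else
            (n.choose (j-1) : ℂ) * (a:ℂ)^j * iteratedDeriv (3*(n+1)-2*j) F z) := by
      rw [Finset.sum_range_succ' (fun j => if j = 0 then 0 else
            (n.choose (j-1) : ℂ) * (a:ℂ)^j * iteratedDeriv (3*(n+1)-2*j) F z) (n+1)]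
      rw [if_pos rfl, add_zero, Finset.mul_sum]
      refine Finset.sum_congr rfl fun j hj => ?_
      have hj' := Finset.mem_range.mp hj
      rw [if_neg (Nat.succ_ne_zero j)]
      have e : 3*n-2*j+1 = 3*(n+1)-2*(j+1) := by omega
      rw [e]
      simp only [Nat.add_sub_cancel]
      ring
    rw [sumA, sumB]
    rw [← Finset.sum_add_distrib]
    refine Finset.sum_congr rfl fun j hj => ?_
    cases j with
    | zero => simp
    | succ k =>
      rw [if_neg (Nat.succ_ne_zero k)]
      simp only [Nat.add_sub_cancel]
      rw [Nat.choose_succ_succ]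
      push_cast
      ring

private lemma nat_fact_aux (n : ℕ) : ∀ j, j ≤ n →
    (3*n - 2*j + 2).factorial * (n+3)^(2*j) ≤ (3*n+2).factorial := by
  intro j
  induction j with
  | zero => intro _; simp [show 3*n - 2*0 + 2 = 3*n+2 by omega]
  | succ k ih =>
    intro hk
    have hk' : k ≤ n := by omega
    calc (3*n - 2*(k+1) + 2).factorial * (n+3)^(2*(k+1))
        = ((3*n - 2*(k+1) + 2).factorial * (n+3)^2) * (n+3)^(2*k) := by
          rw [mul_assoc, ← pow_add]; congr 2; omega
      _ ≤ (3*n - 2*k + 2).factorial * (n+3)^(2*k) := by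
          apply Nat.mul_le_mul_right
          have hm : 3*n - 2*k + 2 = (3*n - 2*(k+1) + 2) + 2 := by omega
          rw [hm]
          have h2 : n + 2 ≤ 3*n - 2*(k+1) + 2 := by omega
          set m := 3*n - 2*(k+1) + 2 with hmdef
          have hfac : (m+2).factorial = (m+2) * ((m+1) * m.factorial) := by
            rw [Nat.factorial_succ, Nat.factorial_succ]
          rw [hfac]
          calc m.factorial * (n+3)^2 = ((n+3)*(n+3)) * m.factorial := by ring
            _ ≤ ((m+2)*(m+1)) * m.factorial := by
                apply Nat.mul_le_mul_right
                apply Nat.mul_le_mul <;> omega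
            _ = (m+2) * ((m+1) * m.factorial) := by ring
      _ ≤ (3*n+2).factorial := ih hk'

private lemma binom_sum (x : ℝ) (n : ℕ) :
    ∑ j ∈ Finset.range (n+1), (n.choose j : ℝ) * x^j = (1+x)^n := by
  rw [add_comm (1:ℝ) x, add_pow]
  refine Finset.sum_congr rfl fun j _ => ?_
  rw [one_pow]; ring

private lemma bdd_seq (q : ℝ) (hq0 : 0 ≤ q) (hq1 : q < 1) :
    ∃ K : ℝ, ∀ n : ℕ, ((3*n+1) * (3*n+2) : ℝ) * q^n ≤ K := by
  have t2 := tendsto_pow_const_mul_const_pow_of_lt_one 2 hq0 hq1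
  have t1 := tendsto_pow_const_mul_const_pow_of_lt_one 1 hq0 hq1
  have t0 := tendsto_pow_atTop_nhds_zero_of_lt_one hq0 hq1
  have ht : Filter.Tendsto (fun n : ℕ => ((3*n+1) * (3*n+2) : ℝ) * q^n)
      Filter.atTop (nhds (9*0 + (9*0 + 2*0))) := by
    have h := (t2.const_mul 9).add ((t1.const_mul 9).add (t0.const_mul 2))
    refine h.congr fun n => ?_
    ring
  obtain ⟨K, hK⟩ := ht.bddAbove_range
  exact ⟨K, fun n => hK (Set.mem_range_self n)⟩

set_option maxHeartbeats 1000000 in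
/-- let `a ≥ 0`, `R > e^{1/(3e)}(1+a)^{1/3}`, and let `y₁ : [-1,0] → ℝ`
be the restriction of a holomorphic function `F` on `D(0,R)` satisfying
`Pⁿy₁(0) = ∂ₓPⁿy₁(0) = 0` for all `n ≥ 0`. With `b_n := ∂ₓ²Pⁿy₁(0)`, there exist
`H ∈ (0, e^{-1/e})` and `C > 0` with `|b_n| ≤ C Hⁿ (3n)!` for all `n ≥ 0`. -/
theorem stmt18 (a : ℝ) (ha : 0 ≤ a) (R : ℝ)
    (hR : R > Real.exp (1 / (3 * Real.exp 1)) * (1 + a) ^ ((1 : ℝ) / 3))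
    (F : ℂ → ℂ) (hF : DifferentiableOn ℂ F (Metric.ball (0 : ℂ) R))
    (y₁ : ℝ → ℝ) (hy₁ : ∀ x ∈ Set.Icc (-1 : ℝ) 0, F x = (y₁ x : ℂ))
    (h0 : ∀ n : ℕ, ((PopC a)^[n] F) 0 = 0)
    (h1 : ∀ n : ℕ, deriv ((PopC a)^[n] F) 0 = 0) :
    ∃ H C : ℝ, 0 < H ∧ H < Real.exp (-(1 / Real.exp 1)) ∧ 0 < C ∧
      ∀ n : ℕ, ‖iteratedDeriv 2 ((PopC a)^[n] F) 0‖ ≤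
        C * H ^ n * (Nat.factorial (3 * n) : ℝ) := by
  have ha1 : (0:ℝ) < 1 + a := by linarith
  set T := Real.exp (1 / (3 * Real.exp 1)) * (1 + a) ^ ((1 : ℝ) / 3) with hTdef
  have hT1 : 1 < T := by
    have hh1 : 1 < Real.exp (1 / (3 * Real.exp 1)) := by
      rw [show (1:ℝ) = Real.exp 0 from (Real.exp_zero).symm]
      exact Real.exp_lt_exp.mpr (by positivity)
    have hh2 : (1:ℝ) ≤ (1 + a) ^ ((1 : ℝ) / 3) :=
      Real.one_le_rpow (by linarith) (by norm_num)
    nlinarith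
  set r := (T + R) / 2 with hrdef
  have hTr : T < r := by simp only [hrdef]; linarith
  have hrR : r < R := by simp only [hrdef]; linarith
  have hr1 : 1 < r := lt_trans hT1 hTr
  have hr0 : 0 < r := by linarith
  have hR0 : 0 < R := by linarith
  have hT3 : T ^ 3 = Real.exp (1 / Real.exp 1) * (1 + a) := by
    rw [hTdef, mul_pow, ← Real.exp_nat_mul, ← Real.rpow_natCast ((1+a) ^ ((1:ℝ)/3)) 3,
      ← Real.rpow_mul ha1.le]
    norm_num
    exact Or.inl (by field_simp)
  set E := Real.exp (-(1 / Real.exp 1)) with hEdef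
  have hE0 : 0 < E := Real.exp_pos _
  have hH0E : 1 / r ^ 3 < E := by
    have h2 : Real.exp (1 / Real.exp 1) < r ^ 3 := by
      have h3 : T ^ 3 < r ^ 3 := pow_lt_pow_left₀ hTr (by linarith) (by norm_num)
      nlinarith [Real.exp_pos (1 / Real.exp 1)]
    rw [hEdef, Real.exp_neg, one_div, inv_lt_inv₀ (by positivity) (Real.exp_pos _)]
    exact h2
  -- Cauchy estimates
  set rn : NNReal := ⟨r, hr0.le⟩ with hrn
  have hrnr : (rn : ℝ) = r := rfl
  have hp : HasFPowerSeriesOnBall F (cauchyPowerSeries F 0 rn) 0 rn := by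
    refine (hF.mono ?_).hasFPowerSeriesOnBall ?_
    · exact fun z hz => mem_ball_zero_iff.mpr
        (lt_of_le_of_lt (by simpa [hrnr] using mem_closedBall_zero_iff.mp hz) hrR)
    · exact_mod_cast hr0
  set M : ℝ := (2 * Real.pi)⁻¹ * ∫ θ : ℝ in (0:ℝ)..2 * Real.pi,
      ‖F (circleMap 0 r θ)‖ with hM
  have hM0 : 0 ≤ M := by
    apply mul_nonneg (by positivity)
    apply intervalIntegral.integral_nonneg Real.two_pi_pos.le
    intro x _; exact norm_nonneg _
  have hCauchy : ∀ m : ℕ, ‖iteratedDeriv m F 0‖ ≤ m.factorial * (M / r ^ m) := by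
    intro m
    have hps := hp.factorial_smul (1 : ℂ) m
    have h2 : ‖iteratedDeriv m F 0‖
        = m.factorial * ‖cauchyPowerSeries F 0 rn m (fun _ => (1:ℂ))‖ := by
      rw [iteratedDeriv, ← hps, nsmul_eq_mul, norm_mul, Complex.norm_natCast]
    rw [h2]
    have h3 : ‖cauchyPowerSeries F 0 rn m (fun _ => (1:ℂ))‖ ≤ M / r ^ m := by
      calc ‖cauchyPowerSeries F 0 rn m (fun _ => (1:ℂ))‖
          ≤ ‖cauchyPowerSeries F 0 rn m‖ * ∏ _i : Fin m, ‖(1:ℂ)‖ :=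
            ContinuousMultilinearMap.le_opNorm _ _
        _ = ‖cauchyPowerSeries F 0 rn m‖ := by simp
        _ ≤ M * |(rn : ℝ)|⁻¹ ^ m := norm_cauchyPowerSeries_le F 0 rn m
        _ = M / r ^ m := by
            rw [hrnr, abs_of_nonneg hr0.le, inv_pow, div_eq_mul_inv]
    exact mul_le_mul_of_nonneg_left h3 (by positivity)
  -- the expansion of the second derivative
  have hA : AnalyticOnNhd ℂ F (Metric.ball (0:ℂ) R) := hF.analyticOnNhd Metric.isOpen_ball
  have h0ball : (0:ℂ) ∈ Metric.ball (0:ℂ) R := Metric.mem_ball_self hR0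
  have key2 : ∀ n : ℕ, iteratedDeriv 2 ((PopC a)^[n] F) 0
      = ∑ j ∈ Finset.range (n+1),
          (n.choose j : ℂ) * (a:ℂ)^j * iteratedDeriv (3*n-2*j+1+1) F 0 := by
    intro n
    have k1 := deriv_sum_iter hA _ (fun j => (n.choose j : ℂ) * (a:ℂ)^j)
      (fun j => 3*n-2*j) (popC_iterate_eqOn a hA n)
    have k2 := deriv_sum_iter hA _ (fun j => (n.choose j : ℂ) * (a:ℂ)^j)
      (fun j => 3*n-2*j+1) k1
    have e2 : iteratedDeriv 2 ((PopC a)^[n] F) 0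
        = deriv (deriv ((PopC a)^[n] F)) 0 := by
      rw [show (2:ℕ) = 1+1 from rfl, iteratedDeriv_succ, iteratedDeriv_one]
    rw [e2, k2 h0ball]
  -- constants
  have hH0pos : (0:ℝ) < 1 / r^3 := by positivity
  set H := (1 / r^3 + E) / 2 with hHdef
  have hHpos : 0 < H := by positivity
  have hH0H : 1 / r^3 < H := by rw [hHdef]; linarith
  have hHE : H < E := by rw [hHdef]; linarith
  set q := (1 / r^3) / H with hqdef
  have hq0 : 0 ≤ q := by positivity
  have hq1 : q < 1 := by rw [hqdef, div_lt_one hHpos]; exact hH0H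
  obtain ⟨K, hK⟩ := bdd_seq q hq0 hq1
  have hK0 : 0 < K := by
    have := hK 0
    simp at this
    nlinarith
  set C := max 1 (M * Real.exp (a * r^2) / r^2 * K) with hCdef
  have hC1 : (1:ℝ) ≤ C := le_max_left _ _
  refine ⟨H, C, hHpos, hHE, lt_of_lt_of_le one_pos hC1, ?_⟩
  intro n
  -- the main analytic estimate
  have hEst : ‖iteratedDeriv 2 ((PopC a)^[n] F) 0‖
      ≤ M * Real.exp (a * r^2) * (((3*n+2).factorial : ℝ) / r^(3*n+2)) := by
    rw [key2 n]
    have hterm : ∀ j ∈ Finset.range (n+1),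
        ‖(n.choose j : ℂ) * (a:ℂ)^j * iteratedDeriv (3*n-2*j+1+1) F 0‖
        ≤ (n.choose j : ℝ) * (a*r^2/((n:ℝ)+3)^2)^j
            * (((3*n+2).factorial : ℝ) * (M / r^(3*n+2))) := by
      intro j hj
      have hjn : j ≤ n := by have := Finset.mem_range.mp hj; omega
      have hnorm : ‖(n.choose j : ℂ) * (a:ℂ)^j * iteratedDeriv (3*n-2*j+1+1) F 0‖
          = (n.choose j : ℝ) * a^j * ‖iteratedDeriv (3*n-2*j+2) F 0‖ := by
        rw [norm_mul, norm_mul, Complex.norm_natCast, norm_pow, Complex.norm_real,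
          Real.norm_eq_abs, abs_of_nonneg ha]
      rw [hnorm]
      have hcore : a^j * (((3*n-2*j+2).factorial:ℝ) * (M / r^(3*n-2*j+2)))
          ≤ (a*r^2/((n:ℝ)+3)^2)^j * (((3*n+2).factorial:ℝ) * (M / r^(3*n+2))) := by
        have hfact : ((3*n-2*j+2).factorial : ℝ) * ((n:ℝ)+3)^(2*j)
            ≤ ((3*n+2).factorial : ℝ) := by exact_mod_cast nat_fact_aux n j hjn
        have hrpow : r ^ (3*n+2) = r ^ (3*n-2*j+2) * r ^ (2*j) := by
          rw [← pow_add]; congr 1; omega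
        have hrw : (a*r^2/((n:ℝ)+3)^2)^j * (((3*n+2).factorial:ℝ) * (M / r^(3*n+2)))
            = a^j * ((((3*n+2).factorial:ℝ) / ((n:ℝ)+3)^(2*j)) * (M / r^(3*n-2*j+2))) := by
          rw [div_pow, mul_pow, hrpow, ← pow_mul, ← pow_mul]
          have hne1 : ((n:ℝ)+3) ≠ 0 := by positivity
          have hne2 : r ≠ 0 := hr0.ne'
          field_simp
        rw [hrw]
        apply mul_le_mul_of_nonneg_left ?_ (by positivity)
        apply mul_le_mul_of_nonneg_right ?_ (by positivity)
        rw [le_div_iff₀ (by positivity)]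
        exact hfact
      calc (n.choose j : ℝ) * a^j * ‖iteratedDeriv (3*n-2*j+2) F 0‖
          ≤ (n.choose j : ℝ) * a^j
              * (((3*n-2*j+2).factorial:ℝ) * (M / r^(3*n-2*j+2))) := by
            exact mul_le_mul_of_nonneg_left (hCauchy _) (by positivity)
        _ = (n.choose j : ℝ) * (a^j * (((3*n-2*j+2).factorial:ℝ)
              * (M / r^(3*n-2*j+2)))) := by ring
        _ ≤ (n.choose j : ℝ) * ((a*r^2/((n:ℝ)+3)^2)^j
              * (((3*n+2).factorial:ℝ) * (M / r^(3*n+2)))) :=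
            mul_le_mul_of_nonneg_left hcore (by positivity)
        _ = (n.choose j : ℝ) * (a*r^2/((n:ℝ)+3)^2)^j
              * (((3*n+2).factorial : ℝ) * (M / r^(3*n+2))) := by ring
    have hexp : (1 + a*r^2/((n:ℝ)+3)^2)^n ≤ Real.exp (a*r^2) := by
      calc (1 + a*r^2/((n:ℝ)+3)^2)^n ≤ (Real.exp (a*r^2/((n:ℝ)+3)^2))^n := by
            apply pow_le_pow_left₀ (by positivity)
            linarith [Real.add_one_le_exp (a*r^2/((n:ℝ)+3)^2)]
        _ = Real.exp ((n:ℝ) * (a*r^2/((n:ℝ)+3)^2)) := by rw [← Real.exp_nat_mul]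
        _ ≤ Real.exp (a*r^2) := by
            apply Real.exp_le_exp.mpr
            have hy : (0:ℝ) ≤ a*r^2 := by positivity
            have hfr : (n:ℝ) / ((n:ℝ)+3)^2 ≤ 1 := by
              rw [div_le_one (by positivity)]
              nlinarith [Nat.cast_nonneg (α := ℝ) n]
            calc (n:ℝ) * (a*r^2/((n:ℝ)+3)^2) = (a*r^2) * ((n:ℝ)/((n:ℝ)+3)^2) := by ring
              _ ≤ (a*r^2) * 1 := mul_le_mul_of_nonneg_left hfr hy
              _ = a*r^2 := mul_one _
    calc ‖∑ j ∈ Finset.range (n+1),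
            (n.choose j : ℂ) * (a:ℂ)^j * iteratedDeriv (3*n-2*j+1+1) F 0‖
        ≤ ∑ j ∈ Finset.range (n+1),
            ‖(n.choose j : ℂ) * (a:ℂ)^j * iteratedDeriv (3*n-2*j+1+1) F 0‖ :=
          norm_sum_le _ _
      _ ≤ ∑ j ∈ Finset.range (n+1), (n.choose j : ℝ) * (a*r^2/((n:ℝ)+3)^2)^j
            * (((3*n+2).factorial : ℝ) * (M / r^(3*n+2))) := Finset.sum_le_sum hterm
      _ = (1 + a*r^2/((n:ℝ)+3)^2)^n * (((3*n+2).factorial : ℝ) * (M / r^(3*n+2))) := by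
          rw [← binom_sum (a*r^2/((n:ℝ)+3)^2) n, Finset.sum_mul]
      _ ≤ Real.exp (a*r^2) * (((3*n+2).factorial : ℝ) * (M / r^(3*n+2))) :=
          mul_le_mul_of_nonneg_right hexp (by positivity)
      _ = M * Real.exp (a * r^2) * (((3*n+2).factorial : ℝ) / r^(3*n+2)) := by ring
  -- final numeric chain
  have hfacsplit : ((3*n+2).factorial : ℝ)
      = ((3*n).factorial : ℝ) * ((3*(n:ℝ)+1) * (3*(n:ℝ)+2)) := by
    have hfs : (3*n+2).factorial = (3*n+2) * ((3*n+1) * (3*n).factorial) := by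
      rw [show 3*n+2 = (3*n+1)+1 from rfl, Nat.factorial_succ, Nat.factorial_succ]
    rw [hfs]; push_cast; ring
  have hrsplit : r^(3*n+2) = (r^3)^n * r^2 := by
    rw [← pow_mul, ← pow_add]
  have hqH : q * H = 1 / r^3 := by
    rw [hqdef, div_mul_cancel₀ _ hHpos.ne']
  have h8 : q ^ n * H ^ n = 1 / (r^3)^n := by
    rw [← mul_pow, hqH, div_pow, one_pow]
  have hden : (1:ℝ) / ((r^3)^n * r^2) = q^n * H^n * (1/r^2) := by
    rw [h8, div_mul_div_comm, one_mul]
  have hCK : M * Real.exp (a*r^2) / r^2 * K ≤ C := le_max_right _ _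
  clear_value T r E rn M H q C
  calc ‖iteratedDeriv 2 ((PopC a)^[n] F) 0‖
      ≤ M * Real.exp (a * r^2) * (((3*n+2).factorial : ℝ) / r^(3*n+2)) := hEst
    _ = M * Real.exp (a * r^2) * (((3*n).factorial:ℝ) * ((3*(n:ℝ)+1)*(3*(n:ℝ)+2))
          * ((1:ℝ)/((r^3)^n * r^2))) := by
        rw [hfacsplit, hrsplit]; ring
    _ = M * Real.exp (a * r^2) * (((3*n).factorial:ℝ) * ((3*(n:ℝ)+1)*(3*(n:ℝ)+2))
          * (q^n * H^n * (1/r^2))) := by rw [hden]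
    _ = (M * Real.exp (a*r^2) / r^2) * (((3*(n:ℝ)+1)*(3*(n:ℝ)+2)) * q^n)
          * (H^n * ((3*n).factorial:ℝ)) := by ring
    _ ≤ (M * Real.exp (a*r^2) / r^2) * K * (H^n * ((3*n).factorial:ℝ)) := by
        apply mul_le_mul_of_nonneg_right ?_ (by positivity)
        apply mul_le_mul_of_nonneg_left (hK n) (by positivity)
    _ ≤ C * (H^n * ((3*n).factorial:ℝ)) :=
        mul_le_mul_of_nonneg_right hCK (by positivity)
    _ = C * H^n * ((3*n).factorial:ℝ) := by ring
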